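/- Let A be a real n×n matrix, S a symmetric positive definite n×n matrix with AᵀS = SA such that SA is positive definite, and B a symmetric positive definite m×m real matrix with m ≤ n. Define g(X) = (1/4)·tr[(S A X B Xᵀ)²] − (1/2)·tr(S A² X B² Xᵀ) and V(X) = A X B − X B Xᵀ S A X. Then for every X ∈ ℝ^{n×m}, the directional derivative of g at X in direction V(X) equals −tr(S A · V(X) · B · V(X)ᵀ) ≤ 0, with strict inequality whenever V(X) ≠ 0. Hence g strictly decreases along nonequilibrium solutions of dX/dt = V(X). -/

import Mathlib

open Matrix

/-- The potential `g(X) = (1/4)·tr[(S A X B Xᵀ)²] − (1/2)·tr(S A² X B² Xᵀ)` of the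
S-Oja-Brockett equation, viewed as a function of `X ∈ ℝ^{n×m}`. -/
noncomputable def gPot (n m : ℕ) (A S : Matrix (Fin n) (Fin n) ℝ)
    (B : Matrix (Fin m) (Fin m) ℝ) (X : Fin n → Fin m → ℝ) : ℝ :=
  (1 / 4) * Matrix.trace ((S * A * Matrix.of X * B * (Matrix.of X)ᵀ) ^ 2)
    - (1 / 2) * Matrix.trace (S * A * A * Matrix.of X * B * B * (Matrix.of X)ᵀ)

/-- The S-Oja-Brockett vector field `V(X) = A X B − X B Xᵀ S A X`. -/
def vField (n m : ℕ) (A S : Matrix (Fin n) (Fin n) ℝ)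
    (B : Matrix (Fin m) (Fin m) ℝ) (X : Fin n → Fin m → ℝ) : Matrix (Fin n) (Fin m) ℝ :=
  A * Matrix.of X * B - Matrix.of X * B * (Matrix.of X)ᵀ * S * A * Matrix.of X

/-- Derivative at `0` of an explicit real quartic polynomial. -/
lemma polyDeriv4 (a0 a1 a2 a3 a4 : ℝ) :
    HasDerivAt (fun t : ℝ => a0 + a1 * t + a2 * t ^ 2 + a3 * t ^ 3 + a4 * t ^ 4) a1 0 := by
  have h : HasDerivAt (fun t : ℝ => a0 + a1 * t + a2 * t ^ 2 + a3 * t ^ 3 + a4 * t ^ 4) _ 0 :=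
    (((((hasDerivAt_const (0:ℝ) a0).add ((hasDerivAt_id 0).const_mul a1)).add
    ((hasDerivAt_pow 2 0).const_mul a2)).add ((hasDerivAt_pow 3 0).const_mul a3)).add
    ((hasDerivAt_pow 4 0).const_mul a4))
  simpa using h

/-- `tr (N Nᵀ) ≥ 0` for real matrices. -/
lemma traceMulTransposeSelfNonneg {k l : ℕ} (N : Matrix (Fin k) (Fin l) ℝ) :
    0 ≤ (N * Nᵀ).trace := by
  rw [Matrix.trace]
  refine Finset.sum_nonneg fun i _ => ?_
  simp only [Matrix.diag_apply, Matrix.mul_apply, Matrix.transpose_apply]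
  exact Finset.sum_nonneg fun j _ => mul_self_nonneg _

/-- `tr (N Nᵀ) > 0` for nonzero real matrices. -/
lemma traceMulTransposeSelfPos {k l : ℕ} (N : Matrix (Fin k) (Fin l) ℝ) (h : N ≠ 0) :
    0 < (N * Nᵀ).trace := by
  obtain ⟨i, j, hij⟩ : ∃ i j, N i j ≠ 0 := by
    by_contra hc
    push_neg at hc
    exact h (by ext i j; simp [hc])
  rw [Matrix.trace]
  refine Finset.sum_pos' (fun a _ => ?_) ⟨i, Finset.mem_univ i, ?_⟩
  · simp only [Matrix.diag_apply, Matrix.mul_apply, Matrix.transpose_apply]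
    exact Finset.sum_nonneg fun j _ => mul_self_nonneg _
  · simp only [Matrix.diag_apply, Matrix.mul_apply, Matrix.transpose_apply]
    exact Finset.sum_pos' (fun a _ => mul_self_nonneg _)
      ⟨j, Finset.mem_univ j, mul_self_pos.2 hij⟩

open scoped MatrixOrder in
/-- `tr (C W B Wᵀ) ≥ 0` for positive definite `C`, `B`, with strict inequality for `W ≠ 0`. -/
lemma tracePosDefSandwich {n m : ℕ} (C : Matrix (Fin n) (Fin n) ℝ)
    (B : Matrix (Fin m) (Fin m) ℝ) (hC : C.PosDef) (hB : B.PosDef)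
    (W : Matrix (Fin n) (Fin m) ℝ) :
    0 ≤ (C * W * B * Wᵀ).trace ∧ (W ≠ 0 → 0 < (C * W * B * Wᵀ).trace) := by
  set c := CFC.sqrt C with hc
  set b := CFC.sqrt B with hb
  have hcc : c * c = C := CFC.sqrt_mul_sqrt_self C hC.posSemidef.nonneg
  have hbb : b * b = B := CFC.sqrt_mul_sqrt_self B hB.posSemidef.nonneg
  have hct : cᵀ = c := by
    rw [← Matrix.conjTranspose_eq_transpose_of_trivial]
    exact (CFC.sqrt_nonneg C).posSemidef.1
  have hbt : bᵀ = b := by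
    rw [← Matrix.conjTranspose_eq_transpose_of_trivial]
    exact (CFC.sqrt_nonneg B).posSemidef.1
  have key : (C * W * B * Wᵀ).trace = ((c * W * b) * (c * W * b)ᵀ).trace := by
    have step1 : ((c * W * b) * (c * W * b)ᵀ).trace = (c * (W * B * Wᵀ) * c).trace := by
      rw [Matrix.transpose_mul, Matrix.transpose_mul, hct, hbt, ← hbb]
      simp only [Matrix.mul_assoc]
    have step2 : (c * (W * B * Wᵀ) * c).trace = (C * W * B * Wᵀ).trace := by
      rw [Matrix.trace_mul_comm, ← Matrix.mul_assoc, hcc]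
      simp only [Matrix.mul_assoc]
    rw [step1, step2]
  constructor
  · rw [key]; exact traceMulTransposeSelfNonneg _
  · intro hW
    rw [key]
    refine traceMulTransposeSelfPos _ fun hz => hW ?_
    have hcd : IsUnit c.det := by
      have hdet : c.det * c.det = C.det := by rw [← Matrix.det_mul, hcc]
      have hC0 : C.det ≠ 0 := ne_of_gt hC.det_pos
      exact isUnit_iff_ne_zero.2 fun h0 => hC0 (by rw [← hdet, h0, zero_mul])
    have hbd : IsUnit b.det := by
      have hdet : b.det * b.det = B.det := by rw [← Matrix.det_mul, hbb]
      have hB0 : B.det ≠ 0 := ne_of_gt hB.det_pos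
      exact isUnit_iff_ne_zero.2 fun h0 => hB0 (by rw [← hdet, h0, zero_mul])
    have hre : c⁻¹ * (c * W * b) * b⁻¹ = (c⁻¹ * c) * W * (b * b⁻¹) := by
      simp only [Matrix.mul_assoc]
    have hWe : W = c⁻¹ * (c * W * b) * b⁻¹ := by
      rw [hre, Matrix.nonsing_inv_mul _ hcd, Matrix.mul_nonsing_inv _ hbd,
        Matrix.one_mul, Matrix.mul_one]
    rw [hWe, hz, Matrix.mul_zero, Matrix.zero_mul]

set_option maxHeartbeats 1000000 in
/-- Along the S-Oja-Brockett vector field the derivative of the potential `g` at `X` in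
direction `V(X)` equals `−tr(S A V(X) B V(X)ᵀ) ≤ 0`, with strict inequality whenever
`V(X) ≠ 0`: `g` strictly decreases along nonequilibrium solutions. -/
theorem stmt_12 (n m : ℕ) (hm : m ≤ n) (A S : Matrix (Fin n) (Fin n) ℝ)
    (B : Matrix (Fin m) (Fin m) ℝ) (hS : S.PosDef) (hsyl : Aᵀ * S = S * A)
    (hSA : (S * A).PosDef) (hB : B.PosDef) (X : Fin n → Fin m → ℝ) :
    HasDerivAt (fun t : ℝ => gPot n m A S B (X + t • Matrix.of.symm (vField n m A S B X)))
      (-Matrix.trace (S * A * vField n m A S B X * B * (vField n m A S B X)ᵀ)) 0 ∧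
    -Matrix.trace (S * A * vField n m A S B X * B * (vField n m A S B X)ᵀ) ≤ 0 ∧
    (vField n m A S B X ≠ 0 →
      -Matrix.trace (S * A * vField n m A S B X * B * (vField n m A S B X)ᵀ) < 0) := by
  have hv : vField n m A S B X =
      A * Matrix.of X * B - Matrix.of X * B * (Matrix.of X)ᵀ * S * A * Matrix.of X := rfl
  set M := Matrix.of X with hM
  set C := S * A with hCdef
  set W := vField n m A S B X with hWdef
  have hBt : Bᵀ = B := by
    rw [← Matrix.conjTranspose_eq_transpose_of_trivial]; exact hB.1
  have hCt : Cᵀ = C := by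
    rw [← Matrix.conjTranspose_eq_transpose_of_trivial]; exact hSA.1
  have hAtC : Aᵀ * C = C * A := by
    rw [hCdef, ← Matrix.mul_assoc, hsyl]
  have hW : W = A * M * B - M * B * Mᵀ * C * M := by
    rw [hv, hCdef]
    congr 1
    simp only [Matrix.mul_assoc]
  set E0 := C * M * B * Mᵀ with hE0
  set E1 := C * W * B * Mᵀ + C * M * B * Wᵀ with hE1
  set E2 := C * W * B * Wᵀ with hE2
  set F0 := C * A * M * B * B * Mᵀ with hF0
  set F1 := C * A * W * B * B * Mᵀ + C * A * M * B * B * Wᵀ with hF1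
  set F2 := C * A * W * B * B * Wᵀ with hF2
  have hfun : (fun t : ℝ => gPot n m A S B (X + t • Matrix.of.symm W)) =
      fun t : ℝ =>
        ((1/4) * (E0*E0).trace - (1/2) * F0.trace)
        + ((1/4) * ((E0*E1).trace + (E1*E0).trace) - (1/2) * F1.trace) * t
        + ((1/4) * ((E0*E2).trace + (E1*E1).trace + (E2*E0).trace) - (1/2) * F2.trace) * t^2
        + ((1/4) * ((E1*E2).trace + (E2*E1).trace)) * t^3
        + ((1/4) * (E2*E2).trace) * t^4 := by
    funext t
    have hof : Matrix.of (X + t • Matrix.of.symm W) = M + t • W := rfl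
    simp only [gPot, hof]
    rw [← hCdef]
    have h1 : C * (M + t • W) * B * (M + t • W)ᵀ = E0 + t • E1 + (t*t) • E2 := by
      rw [hE0, hE1, hE2]
      simp only [Matrix.mul_add, Matrix.add_mul, Matrix.mul_smul, Matrix.smul_mul,
        Matrix.transpose_add, Matrix.transpose_smul, smul_add, smul_smul]
      module
    have h2 : C * A * (M + t • W) * B * B * (M + t • W)ᵀ = F0 + t • F1 + (t*t) • F2 := by
      rw [hF0, hF1, hF2]
      simp only [Matrix.mul_add, Matrix.add_mul, Matrix.mul_smul, Matrix.smul_mul,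
        Matrix.transpose_add, Matrix.transpose_smul, smul_add, smul_smul]
      module
    rw [h1, h2, pow_two]
    simp only [Matrix.add_mul, Matrix.mul_add, Matrix.smul_mul, Matrix.mul_smul,
      Matrix.trace_add, Matrix.trace_smul, smul_eq_mul, smul_smul]
    ring
  have t_a : (E0 * (C*W*B*Mᵀ)).trace = (E0 * (C*M*B*Wᵀ)).trace := by
    have e1 : (E0 * (C*W*B*Mᵀ))ᵀ = (M*B*Wᵀ*C) * (M*B*Mᵀ*C) := by
      rw [hE0]
      simp only [Matrix.transpose_mul, Matrix.transpose_transpose, hBt, hCt, Matrix.mul_assoc]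
    calc (E0 * (C*W*B*Mᵀ)).trace
        = ((E0 * (C*W*B*Mᵀ))ᵀ).trace := (Matrix.trace_transpose _).symm
      _ = ((M*B*Wᵀ*C) * (M*B*Mᵀ*C)).trace := by rw [e1]
      _ = ((M*B*Mᵀ*C) * (M*B*Wᵀ*C)).trace := Matrix.trace_mul_comm _ _
      _ = ((M*B*Mᵀ*C*M*B*Wᵀ) * C).trace := by congr 1; simp only [Matrix.mul_assoc]
      _ = (C * (M*B*Mᵀ*C*M*B*Wᵀ)).trace := Matrix.trace_mul_comm _ _
      _ = (E0 * (C*M*B*Wᵀ)).trace := by rw [hE0]; congr 1; simp only [Matrix.mul_assoc]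
  have t_f : (C*A*W*B*B*Mᵀ).trace = (C*A*M*B*B*Wᵀ).trace := by
    have e1 : (C*A*W*B*B*Mᵀ)ᵀ = (M*B*B*Wᵀ) * (C*A) := by
      simp only [Matrix.transpose_mul, Matrix.transpose_transpose, hBt, hCt, hAtC,
        Matrix.mul_assoc]
    calc (C*A*W*B*B*Mᵀ).trace
        = ((C*A*W*B*B*Mᵀ)ᵀ).trace := (Matrix.trace_transpose _).symm
      _ = ((M*B*B*Wᵀ) * (C*A)).trace := by rw [e1]
      _ = ((C*A) * (M*B*B*Wᵀ)).trace := Matrix.trace_mul_comm _ _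
      _ = (C*A*M*B*B*Wᵀ).trace := by congr 1; simp only [Matrix.mul_assoc]
  have hE2tr : E2.trace = (C*A*M*B*B*Wᵀ).trace - (E0 * (C*M*B*Wᵀ)).trace := by
    have hCW : C * W = C * (A*M*B) - C * (M*B*Mᵀ*C*M) := by
      rw [hW, Matrix.mul_sub]
    have e1 : C*(A*M*B)*B*Wᵀ = C*A*M*B*B*Wᵀ := by simp only [Matrix.mul_assoc]
    have e2 : C*(M*B*Mᵀ*C*M)*B*Wᵀ = E0*(C*M*B*Wᵀ) := by
      rw [hE0]; simp only [Matrix.mul_assoc]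
    rw [hE2, hCW, Matrix.sub_mul, Matrix.sub_mul, e1, e2, Matrix.trace_sub]
  have hval : ((1/4) * ((E0*E1).trace + (E1*E0).trace) - (1/2) * F1.trace) = -E2.trace := by
    have h1 : (E0*E1).trace = (E0*(C*W*B*Mᵀ)).trace + (E0*(C*M*B*Wᵀ)).trace := by
      rw [hE1, Matrix.mul_add, Matrix.trace_add]
    have h2 : F1.trace = (C*A*W*B*B*Mᵀ).trace + (C*A*M*B*B*Wᵀ).trace := by
      rw [hF1, Matrix.trace_add]
    rw [Matrix.trace_mul_comm E1 E0, h1, h2, t_a, t_f, hE2tr]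
    ring
  have hsand := tracePosDefSandwich C B hSA hB W
  refine ⟨?_, ?_, ?_⟩
  · rw [hfun, ← hval]
    exact polyDeriv4 _ _ _ _ _
  · linarith [hsand.1]
  · intro hne
    have := hsand.2 hne
    linarith
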